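/- Consider the single-counter parameterized Bernoulli gadget Markov chain with parameter p ∈ [0,1]: states {q0,q1,q2} × ℕ³ with counters (a0,a1,x0), where (q0,(a0,a1,x0)) moves with probability 1 to (q1,(a0,x0,x0)); (q1,(a0,a1,x0)) with a1 > 0 moves with probability p to (q1,(a0,a1−1,x0)) and with probability 1−p to (q2,(a0+1,0,x0)); (q1,(a0,0,x0)) moves with probability 1 to (q2,(a0,0,x0)); and q2-states are absorbing. Then for all k, c ∈ ℕ, started at (q0,(k,0,c)): the probability of eventually reaching (q2,(k,0,c)) (i.e., reaching q2 without incrementing a0) equals p^c, and the probability of eventually reaching (q2,(k+1,0,c)) equals 1 − p^c. -/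

import Mathlib

/-- Probability of a finite path: starting at `s`, then visiting the states in `l` in order. -/
def pathProb {S : Type} (P : S → S → ℝ) : S → List S → ℝ
  | _, [] => 1
  | s, t :: l => P s t * pathProb P t l

/-- `FirstHit s s' l` holds iff the path `s :: l` visits `s'` exactly once, as its last state. -/
def FirstHit {S : Type} (s s' : S) (l : List S) : Prop :=
  (l = [] ∧ s = s') ∨ (s ≠ s' ∧ l.getLast? = some s' ∧ ∀ t ∈ l.dropLast, t ≠ s')

open Classical in
/-- Probability of eventually reaching `s'` from `s`: the sum over all finite paths
from `s` to `s'` that visit `s'` only as their last state of the path probabilities. -/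
noncomputable def reachProb {S : Type} (P : S → S → ℝ) (s s' : S) : ℝ :=
  ∑' l : List S, if FirstHit s s' l then pathProb P s l else 0

/-- `IsPath P s l` holds iff every step of the path `s :: l` has positive probability. -/
def IsPath {S : Type} (P : S → S → ℝ) : S → List S → Prop
  | _, [] => True
  | s, t :: l => 0 < P s t ∧ IsPath P t l
/-- The control states of the parameterized Bernoulli gadget. -/
inductive Ctl
  | q0 | q1 | q2
  deriving DecidableEq

/-- States of the single-counter parameterized Bernoulli gadget Markov chain:
a control state together with the three counters `(a0, a1, x0)`. -/
abbrev BSt := Ctl × ℕ × ℕ × ℕ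

/-- Transition probabilities of the single-counter parameterized Bernoulli gadget
Markov chain with parameter `p`:
* `(q0,(a0,a1,x0))` moves with probability `1` to `(q1,(a0,x0,x0))`;
* `(q1,(a0,a1,x0))` with `a1 > 0` moves with probability `p` to `(q1,(a0,a1-1,x0))`
  and with probability `1 - p` to `(q2,(a0+1,0,x0))`;
* `(q1,(a0,0,x0))` moves with probability `1` to `(q2,(a0,0,x0))`;
* states with control `q2` are absorbing. -/
def pberP (p : ℝ) : BSt → BSt → ℝ
  | (Ctl.q0, a0, _, x0), s' => if s' = (Ctl.q1, a0, x0, x0) then 1 else 0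
  | (Ctl.q1, a0, a1 + 1, x0), s' =>
      if s' = (Ctl.q1, a0, a1, x0) then p
      else if s' = (Ctl.q2, a0 + 1, 0, x0) then 1 - p
      else 0
  | (Ctl.q1, a0, 0, x0), s' => if s' = (Ctl.q2, a0, 0, x0) then 1 else 0
  | (Ctl.q2, a0, a1, x0), s' => if s' = (Ctl.q2, a0, a1, x0) then 1 else 0

namespace PBerAux

/-- canonical success path from `(q1,k,n,x0)`. -/
def sPath (k x0 : ℕ) : ℕ → List BSt
  | 0 => [(Ctl.q2, k, 0, x0)]
  | n + 1 => (Ctl.q1, k, n, x0) :: sPath k x0 n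

/-- canonical failure path from `(q1,k,a1,x0)` branching after `j` down-steps. -/
def fPath (k x0 : ℕ) : ℕ → ℕ → List BSt
  | _, 0 => [(Ctl.q2, k + 1, 0, x0)]
  | a1, j + 1 => (Ctl.q1, k, a1 - 1, x0) :: fPath k x0 (a1 - 1) j

variable {p : ℝ}

lemma pathProb_cons {S : Type} (P : S → S → ℝ) (s t : S) (l : List S) :
    pathProb P s (t :: l) = P s t * pathProb P t l := rfl

lemma pp_nonzero {S : Type} {P : S → S → ℝ} {s t : S} {l : List S}
    (h : pathProb P s (t :: l) ≠ 0) : P s t ≠ 0 ∧ pathProb P t l ≠ 0 := by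
  rw [pathProb_cons, mul_ne_zero_iff] at h; exact h

lemma q0_step {k a1 x0 : ℕ} {t : BSt} (h : pberP p (Ctl.q0, k, a1, x0) t ≠ 0) :
    t = (Ctl.q1, k, x0, x0) := by
  have e : pberP p (Ctl.q0, k, a1, x0) t = if t = (Ctl.q1, k, x0, x0) then 1 else 0 := rfl
  rw [e] at h
  by_contra hne
  rw [if_neg hne] at h
  exact h rfl

lemma q1z_step {k x0 : ℕ} {t : BSt} (h : pberP p (Ctl.q1, k, 0, x0) t ≠ 0) :
    t = (Ctl.q2, k, 0, x0) := by
  have e : pberP p (Ctl.q1, k, 0, x0) t = if t = (Ctl.q2, k, 0, x0) then 1 else 0 := rfl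
  rw [e] at h
  by_contra hne
  rw [if_neg hne] at h
  exact h rfl

lemma q1s_step {k m x0 : ℕ} {t : BSt} (h : pberP p (Ctl.q1, k, m + 1, x0) t ≠ 0) :
    t = (Ctl.q1, k, m, x0) ∨ t = (Ctl.q2, k + 1, 0, x0) := by
  have e : pberP p (Ctl.q1, k, m + 1, x0) t =
      if t = (Ctl.q1, k, m, x0) then p else if t = (Ctl.q2, k + 1, 0, x0) then 1 - p else 0 := rfl
  rw [e] at h
  split_ifs at h with h1 h2
  · exact Or.inl h1
  · exact Or.inr h2
  · exact absurd rfl h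

lemma q2_step {a : ℕ × ℕ × ℕ} {t : BSt} (h : pberP p (Ctl.q2, a) t ≠ 0) :
    t = (Ctl.q2, a) := by
  obtain ⟨a0, a1, x0⟩ := a
  have e : pberP p (Ctl.q2, a0, a1, x0) t = if t = (Ctl.q2, a0, a1, x0) then 1 else 0 := rfl
  rw [e] at h
  by_contra hne
  rw [if_neg hne] at h
  exact h rfl

lemma q2_stay {a : ℕ × ℕ × ℕ} :
    ∀ {l : List BSt}, pathProb (pberP p) (Ctl.q2, a) l ≠ 0 → ∀ t ∈ l, t = (Ctl.q2, a) := by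
  intro l
  induction l with
  | nil => intro _ t ht; simp at ht
  | cons u l' ih =>
    intro h t ht
    obtain ⟨h1, h2⟩ := pp_nonzero h
    have hu : u = (Ctl.q2, a) := q2_step h1
    subst hu
    rcases List.mem_cons.mp ht with rfl | ht'
    · rfl
    · exact ih h2 t ht'

lemma q2_last {a : ℕ × ℕ × ℕ} {l : List BSt} (h : pathProb (pberP p) (Ctl.q2, a) l ≠ 0)
    (hne : l ≠ []) : l.getLast? = some (Ctl.q2, a) := by
  rw [List.getLast?_eq_getLast hne]
  exact congrArg some (q2_stay h _ (List.getLast_mem hne))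

/-- characterization of positive first-hit paths to the success state -/
lemma succ_char {k x0 : ℕ} :
    ∀ (l : List BSt) (a1 : ℕ),
      pathProb (pberP p) (Ctl.q1, k, a1, x0) l ≠ 0 →
      l.getLast? = some (Ctl.q2, k, 0, x0) →
      (∀ t ∈ l.dropLast, t ≠ (Ctl.q2, k, 0, x0)) →
      l = sPath k x0 a1 := by
  intro l
  induction l with
  | nil => intro a1 _ hlast _; simp at hlast
  | cons t l' ih =>
    intro a1 hpp hlast hdrop
    obtain ⟨h1, h2⟩ := pp_nonzero hpp
    cases a1 with
    | zero =>
      have ht : t = (Ctl.q2, k, 0, x0) := q1z_step h1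
      subst ht
      cases l' with
      | nil => rfl
      | cons u l'' =>
        exact absurd rfl (hdrop _ (by simp))
    | succ m =>
      rcases q1s_step h1 with ht | ht
      · subst ht
        cases l' with
        | nil => simp at hlast
        | cons u l'' =>
          have hd : ∀ t ∈ (u :: l'').dropLast, t ≠ (Ctl.q2, k, 0, x0) := by
            intro t ht'; exact hdrop t (by simp [ht'])
          have := ih m h2 (by rwa [List.getLast?_cons_cons] at hlast) hd
          rw [show sPath k x0 (m + 1) = (Ctl.q1, k, m, x0) :: sPath k x0 m from rfl, ← this]
      · subst ht
        cases l' with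
        | nil => simp at hlast
        | cons u l'' =>
          have hl := q2_last (a := (k + 1, 0, x0)) h2 (by simp)
          rw [List.getLast?_cons_cons, hl] at hlast
          simp at hlast

/-- characterization of positive first-hit paths to the failure state -/
lemma fail_char {k x0 : ℕ} :
    ∀ (l : List BSt) (a1 : ℕ),
      pathProb (pberP p) (Ctl.q1, k, a1, x0) l ≠ 0 →
      l.getLast? = some (Ctl.q2, k + 1, 0, x0) →
      (∀ t ∈ l.dropLast, t ≠ (Ctl.q2, k + 1, 0, x0)) →
      ∃ j < a1, l = fPath k x0 a1 j := by
  intro l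
  induction l with
  | nil => intro a1 _ hlast _; simp at hlast
  | cons t l' ih =>
    intro a1 hpp hlast hdrop
    obtain ⟨h1, h2⟩ := pp_nonzero hpp
    cases a1 with
    | zero =>
      have ht : t = (Ctl.q2, k, 0, x0) := q1z_step h1
      subst ht
      cases l' with
      | nil => simp at hlast
      | cons u l'' =>
        have hl := q2_last (a := (k, 0, x0)) h2 (by simp)
        rw [List.getLast?_cons_cons, hl] at hlast
        simp at hlast
    | succ m =>
      rcases q1s_step h1 with ht | ht
      · subst ht
        cases l' with
        | nil => simp at hlast
        | cons u l'' =>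
          have hd : ∀ t ∈ (u :: l'').dropLast, t ≠ (Ctl.q2, k + 1, 0, x0) := by
            intro t ht'; exact hdrop t (by simp [ht'])
          obtain ⟨j, hj, he⟩ := ih m h2 (by rwa [List.getLast?_cons_cons] at hlast) hd
          refine ⟨j + 1, by omega, ?_⟩
          rw [show fPath k x0 (m + 1) (j + 1) = (Ctl.q1, k, m, x0) :: fPath k x0 m j from rfl,
            ← he]
      · subst ht
        cases l' with
        | nil => exact ⟨0, by omega, rfl⟩
        | cons u l'' =>
          exact absurd rfl (hdrop _ (by simp))

lemma sPath_prob (k x0 : ℕ) : ∀ n, pathProb (pberP p) (Ctl.q1, k, n, x0) (sPath k x0 n) = p ^ n := by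
  intro n
  induction n with
  | zero =>
    show pberP p (Ctl.q1, k, 0, x0) (Ctl.q2, k, 0, x0) * 1 = 1
    have e : pberP p (Ctl.q1, k, 0, x0) (Ctl.q2, k, 0, x0) = 1 := if_pos rfl
    rw [e, mul_one]
  | succ n ihn =>
    show pberP p (Ctl.q1, k, n + 1, x0) (Ctl.q1, k, n, x0) *
        pathProb (pberP p) (Ctl.q1, k, n, x0) (sPath k x0 n) = p ^ (n + 1)
    have e : pberP p (Ctl.q1, k, n + 1, x0) (Ctl.q1, k, n, x0) = p := if_pos rfl
    rw [e, ihn, pow_succ, mul_comm]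

lemma fPath_prob (k x0 : ℕ) :
    ∀ j a1, j < a1 →
      pathProb (pberP p) (Ctl.q1, k, a1, x0) (fPath k x0 a1 j) = p ^ j * (1 - p) := by
  intro j
  induction j with
  | zero =>
    intro a1 ha
    obtain ⟨m, rfl⟩ : ∃ m, a1 = m + 1 := ⟨a1 - 1, by omega⟩
    show pberP p (Ctl.q1, k, m + 1, x0) (Ctl.q2, k + 1, 0, x0) * 1 = p ^ 0 * (1 - p)
    have e : pberP p (Ctl.q1, k, m + 1, x0) (Ctl.q2, k + 1, 0, x0) = 1 - p := by
      rw [show pberP p (Ctl.q1, k, m + 1, x0) (Ctl.q2, k + 1, 0, x0) =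
        if ((Ctl.q2, k + 1, 0, x0) : BSt) = (Ctl.q1, k, m, x0) then p
        else if ((Ctl.q2, k + 1, 0, x0) : BSt) = (Ctl.q2, k + 1, 0, x0) then 1 - p else 0 from rfl]
      rw [if_neg (by simp), if_pos rfl]
    rw [e]; ring
  | succ j ihj =>
    intro a1 ha
    obtain ⟨m, rfl⟩ : ∃ m, a1 = m + 1 := ⟨a1 - 1, by omega⟩
    show pberP p (Ctl.q1, k, m + 1, x0) (Ctl.q1, k, m, x0) *
        pathProb (pberP p) (Ctl.q1, k, m, x0) (fPath k x0 m j) = p ^ (j + 1) * (1 - p)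
    have e : pberP p (Ctl.q1, k, m + 1, x0) (Ctl.q1, k, m, x0) = p := if_pos rfl
    rw [e, ihj m (by omega)]; ring

lemma sPath_last (k x0 : ℕ) : ∀ n, (sPath k x0 n).getLast? = some (Ctl.q2, k, 0, x0) := by
  intro n
  induction n with
  | zero => rfl
  | succ n ihn =>
    cases hn : sPath k x0 n with
    | nil => rw [hn] at ihn; simp at ihn
    | cons u l =>
      rw [show sPath k x0 (n + 1) = (Ctl.q1, k, n, x0) :: sPath k x0 n from rfl, hn,
        List.getLast?_cons_cons, ← hn, ihn]

lemma sPath_drop (k x0 : ℕ) : ∀ n, ∀ t ∈ (sPath k x0 n).dropLast, t.1 = Ctl.q1 := by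
  intro n
  induction n with
  | zero => intro t ht; simp [sPath] at ht
  | succ n ihn =>
    intro t ht
    rw [show sPath k x0 (n + 1) = (Ctl.q1, k, n, x0) :: sPath k x0 n from rfl] at ht
    cases hn : sPath k x0 n with
    | nil => exact absurd (sPath_last k x0 n) (by rw [hn]; simp)
    | cons u l =>
      rw [hn, List.dropLast_cons₂, List.mem_cons, ← hn] at ht
      rcases ht with rfl | ht
      · rfl
      · exact ihn t ht

lemma fPath_last (k x0 : ℕ) :
    ∀ j a1, (fPath k x0 a1 j).getLast? = some (Ctl.q2, k + 1, 0, x0) := by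
  intro j
  induction j with
  | zero => intro a1; rfl
  | succ j ihj =>
    intro a1
    cases hn : fPath k x0 (a1 - 1) j with
    | nil => exact absurd (ihj (a1 - 1)) (by rw [hn]; simp)
    | cons u l =>
      rw [show fPath k x0 a1 (j + 1) = (Ctl.q1, k, a1 - 1, x0) :: fPath k x0 (a1 - 1) j from rfl,
        hn, List.getLast?_cons_cons, ← hn, ihj]

lemma fPath_drop (k x0 : ℕ) :
    ∀ j a1, ∀ t ∈ (fPath k x0 a1 j).dropLast, t.1 = Ctl.q1 := by
  intro j
  induction j with
  | zero => intro a1 t ht; simp [fPath] at ht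
  | succ j ihj =>
    intro a1 t ht
    rw [show fPath k x0 a1 (j + 1) = (Ctl.q1, k, a1 - 1, x0) :: fPath k x0 (a1 - 1) j from rfl]
      at ht
    cases hn : fPath k x0 (a1 - 1) j with
    | nil => exact absurd (fPath_last k x0 j (a1 - 1)) (by rw [hn]; simp)
    | cons u l =>
      rw [hn, List.dropLast_cons₂, List.mem_cons, ← hn] at ht
      rcases ht with rfl | ht
      · rfl
      · exact ihj (a1 - 1) t ht

lemma fPath_length (k x0 : ℕ) : ∀ j a1, (fPath k x0 a1 j).length = j + 1 := by
  intro j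
  induction j with
  | zero => intro a1; rfl
  | succ j ihj =>
    intro a1
    rw [show fPath k x0 a1 (j + 1) = (Ctl.q1, k, a1 - 1, x0) :: fPath k x0 (a1 - 1) j from rfl,
      List.length_cons, ihj]

end PBerAux

open PBerAux in
/-- In the single-counter parameterized Bernoulli gadget Markov chain
with parameter `p ∈ [0,1]`, started at `(q0,(k,0,c))`: the probability of eventually
reaching `(q2,(k,0,c))` (i.e., reaching `q2` without incrementing `a0`) equals `p^c`,
and the probability of eventually reaching `(q2,(k+1,0,c))` equals `1 - p^c`. -/
theorem parameterized_bernoulli_gadget (p : ℝ) (hp : p ∈ Set.Icc (0 : ℝ) 1) (k c : ℕ) :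
    reachProb (pberP p) (Ctl.q0, k, 0, c) (Ctl.q2, k, 0, c) = p ^ c ∧
    reachProb (pberP p) (Ctl.q0, k, 0, c) (Ctl.q2, k + 1, 0, c) = 1 - p ^ c := by
  classical
  set s0 : BSt := (Ctl.q0, k, 0, c) with hs0
  constructor
  · -- success
    set tgt : BSt := (Ctl.q2, k, 0, c) with htgt
    set L : List BSt := (Ctl.q1, k, c, c) :: sPath k c c with hL
    have hsne : sPath k c c ≠ [] := by
      intro h; exact absurd (sPath_last k c c) (by rw [h]; simp)
    have hlastL : L.getLast? = some tgt := by
      cases hn : sPath k c c with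
      | nil => exact absurd hn hsne
      | cons u l =>
        rw [hL, hn, List.getLast?_cons_cons, ← hn, sPath_last]
    have hdropL : ∀ t ∈ L.dropLast, t ≠ tgt := by
      intro t ht
      cases hn : sPath k c c with
      | nil => exact absurd hn hsne
      | cons u l =>
        rw [hL, hn, List.dropLast_cons₂, List.mem_cons, ← hn] at ht
        rcases ht with rfl | ht
        · simp [htgt]
        · have := sPath_drop k c c t ht
          intro he; rw [he] at this; simp [htgt] at this
    have hFH : FirstHit s0 tgt L := by
      refine Or.inr ⟨by simp [hs0, htgt], hlastL, hdropL⟩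
    have hzero : ∀ l ∉ ({L} : Finset (List BSt)),
        (if FirstHit s0 tgt l then pathProb (pberP p) s0 l else 0) = 0 := by
      intro l hl
      by_cases hF : FirstHit s0 tgt l
      · rw [if_pos hF]
        by_contra hnz
        rcases hF with ⟨_, he⟩ | ⟨_, hlast, hdrop⟩
        · simp [hs0, htgt] at he
        · cases l with
          | nil => simp at hlast
          | cons t l' =>
            obtain ⟨h1, h2⟩ := pp_nonzero hnz
            have ht : t = (Ctl.q1, k, c, c) := q0_step h1
            subst ht
            cases l' with
            | nil => simp [htgt] at hlast
            | cons u l'' =>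
              have hd : ∀ t ∈ (u :: l'').dropLast, t ≠ tgt := by
                intro t ht'; exact hdrop t (by simp [ht'])
              have := succ_char (u :: l'') c h2
                (by rwa [List.getLast?_cons_cons] at hlast) hd
              exact hl (by simp [hL, this])
      · rw [if_neg hF]
    have : reachProb (pberP p) s0 tgt =
        ∑ l ∈ ({L} : Finset (List BSt)),
          (if FirstHit s0 tgt l then pathProb (pberP p) s0 l else 0) := by
      rw [reachProb]; exact tsum_eq_sum hzero
    rw [this, Finset.sum_singleton, if_pos hFH]
    have e1 : pathProb (pberP p) s0 L =
        pberP p s0 (Ctl.q1, k, c, c) * pathProb (pberP p) (Ctl.q1, k, c, c) (sPath k c c) := rfl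
    have e2 : pberP p s0 (Ctl.q1, k, c, c) = 1 := if_pos rfl
    rw [e1, e2, sPath_prob, one_mul]
  · -- failure
    set tgt : BSt := (Ctl.q2, k + 1, 0, c) with htgt
    set G : ℕ → List BSt := fun j => (Ctl.q1, k, c, c) :: fPath k c c j with hG
    have hFH : ∀ j, FirstHit s0 tgt (G j) := by
      intro j
      have hfne : fPath k c c j ≠ [] := by
        intro h; exact absurd (fPath_last k c j c) (by rw [h]; simp)
      refine Or.inr ⟨by simp [hs0, htgt], ?_, ?_⟩
      · cases hn : fPath k c c j with
        | nil => exact absurd hn hfne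
        | cons u l =>
          rw [hG]; simp only
          rw [hn, List.getLast?_cons_cons, ← hn, fPath_last]
      · intro t ht
        rw [hG] at ht; simp only at ht
        cases hn : fPath k c c j with
        | nil => exact absurd hn hfne
        | cons u l =>
          rw [hn, List.dropLast_cons₂, List.mem_cons, ← hn] at ht
          rcases ht with rfl | ht
          · simp [htgt]
          · have := fPath_drop k c j c t ht
            intro he; rw [he] at this; simp [htgt] at this
    have hzero : ∀ l ∉ Finset.image G (Finset.range c),
        (if FirstHit s0 tgt l then pathProb (pberP p) s0 l else 0) = 0 := by
      intro l hl
      by_cases hF : FirstHit s0 tgt l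
      · rw [if_pos hF]
        by_contra hnz
        rcases hF with ⟨_, he⟩ | ⟨_, hlast, hdrop⟩
        · simp [hs0, htgt] at he
        · cases l with
          | nil => simp at hlast
          | cons t l' =>
            obtain ⟨h1, h2⟩ := pp_nonzero hnz
            have ht : t = (Ctl.q1, k, c, c) := q0_step h1
            subst ht
            cases l' with
            | nil => simp [htgt] at hlast
            | cons u l'' =>
              have hd : ∀ t ∈ (u :: l'').dropLast, t ≠ tgt := by
                intro t ht'; exact hdrop t (by simp [ht'])
              obtain ⟨j, hj, he⟩ := fail_char (u :: l'') c h2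
                (by rwa [List.getLast?_cons_cons] at hlast) hd
              refine hl (Finset.mem_image.mpr ⟨j, Finset.mem_range.mpr hj, ?_⟩)
              rw [hG]; simp only [he]
      · rw [if_neg hF]
    have hinj : ∀ x ∈ Finset.range c, ∀ y ∈ Finset.range c, G x = G y → x = y := by
      intro x _ y _ hxy
      rw [hG] at hxy; simp only [List.cons.injEq] at hxy
      have := congrArg List.length hxy.2
      rw [fPath_length, fPath_length] at this
      omega
    have : reachProb (pberP p) s0 tgt =
        ∑ l ∈ Finset.image G (Finset.range c),
          (if FirstHit s0 tgt l then pathProb (pberP p) s0 l else 0) := by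
      rw [reachProb]; exact tsum_eq_sum hzero
    rw [this, Finset.sum_image hinj]
    have hval : ∀ j ∈ Finset.range c,
        (if FirstHit s0 tgt (G j) then pathProb (pberP p) s0 (G j) else 0) =
          p ^ j * (1 - p) := by
      intro j hj
      rw [if_pos (hFH j)]
      have e1 : pathProb (pberP p) s0 (G j) =
          pberP p s0 (Ctl.q1, k, c, c) * pathProb (pberP p) (Ctl.q1, k, c, c) (fPath k c c j) :=
        rfl
      have e2 : pberP p s0 (Ctl.q1, k, c, c) = 1 := if_pos rfl
      rw [e1, e2, fPath_prob k c j c (Finset.mem_range.mp hj), one_mul]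
    rw [Finset.sum_congr rfl hval]
    have hg := geom_sum_mul p c
    have : ∑ j ∈ Finset.range c, p ^ j * (1 - p) =
        -((∑ j ∈ Finset.range c, p ^ j) * (p - 1)) := by
      rw [Finset.sum_mul, ← Finset.sum_neg_distrib]
      exact Finset.sum_congr rfl fun i _ => by ring
    rw [this, hg]; ring
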